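/- Let λ > 0, let Λ = diag(λ₁,…,λ_N) be diagonal with λ = λ₁ ≤ λ₂ ≤ ⋯ ≤ λ_N, let T ∈ ℕ with effective dimension d, and let x₁,…,x_T ∈ ℝ^N with ‖x_t‖₂ ≤ 1 for all t. Define V_t = Λ + Σ_{i=1}^{t−1} xᵢxᵢᵀ. Then for every β ≥ 0, Σ_{t=1}^{T} min{2, 2β·‖x_t‖_{V_t^{−1}}} ≤ 4(1+β)·√(T·d·log(1 + T/λ)). -/

import Mathlib

open Matrix
open Finset

private lemma amgm11 {n : ℕ} (hn : 0 < n) (μ : Fin n → ℝ) (hμ : ∀ i, 0 ≤ μ i)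
    (hsum : ∑ i, μ i = n) : ∏ i, μ i ≤ 1 := by
  have hw : ∀ i ∈ (univ : Finset (Fin n)), (0:ℝ) ≤ 1/n := fun _ _ => by positivity
  have hw' : ∑ _i ∈ (univ : Finset (Fin n)), (1/n : ℝ) = 1 := by
    simp [Finset.sum_const]
    field_simp
  have h := Real.geom_mean_le_arith_mean_weighted univ (fun _ => 1/n) μ hw hw'
    (fun i _ => hμ i)
  have hprod : (∏ i, μ i ^ (1/n : ℝ)) = (∏ i, μ i) ^ (1/n : ℝ) :=
    Real.finset_prod_rpow univ μ (fun i _ => hμ i) _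
  have h2 : (∏ i, μ i) ^ (1/n : ℝ) ≤ 1 := by
    rw [← hprod]
    calc (∏ i, μ i ^ (1/n:ℝ)) ≤ ∑ i, (1/n:ℝ) * μ i := h
    _ = 1 := by rw [← Finset.mul_sum, hsum]; field_simp
  have hP : (0:ℝ) ≤ ∏ i, μ i := Finset.prod_nonneg fun i _ => hμ i
  have : ((∏ i, μ i) ^ (1/n : ℝ)) ^ (n:ℝ) ≤ 1 ^ (n:ℝ) :=
    Real.rpow_le_rpow (Real.rpow_nonneg hP _) h2 (by positivity)
  rwa [← Real.rpow_mul hP, one_div,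
    inv_mul_cancel₀ (by exact_mod_cast hn.ne'), Real.rpow_one, Real.one_rpow] at this

private lemma trace_eq_sum_eigs11 {n:ℕ} {A : Matrix (Fin n) (Fin n) ℝ} (hA : A.IsHermitian) :
    A.trace = ∑ i, hA.eigenvalues i := by
  conv_lhs => rw [hA.spectral_theorem]
  simp only [Unitary.conjStarAlgAut_apply, Unitary.coe_star]
  rw [Matrix.trace_mul_cycle]
  rw [(Matrix.mem_unitaryGroup_iff').mp (hA.eigenvectorUnitary).2, Matrix.one_mul]
  simp [Matrix.trace_diagonal]

/-- Hadamard's determinant inequality for positive semidefinite matrices. -/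
private lemma hadamard11 {n : ℕ} {A : Matrix (Fin n) (Fin n) ℝ} (hA : A.PosSemidef)
    (hdiag : ∀ i, 0 < A i i) : A.det ≤ ∏ i, A i i := by
  rcases Nat.eq_zero_or_pos n with h0 | hn
  · subst h0; simp
  set e : Fin n → ℝ := fun i => (Real.sqrt (A i i))⁻¹ with he
  have hepos : ∀ i, 0 < e i := fun i => by
    have := Real.sqrt_pos.mpr (hdiag i); positivity
  set D := Matrix.diagonal e with hDdef
  have hD : Dᴴ = D := by
    simp [hDdef, Matrix.diagonal_conjTranspose]
  have hM : (D * A * D).PosSemidef := by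
    have := hA.mul_mul_conjTranspose_same D
    rwa [hD] at this
  have hMdiag : ∀ i, (D * A * D) i i = 1 := by
    intro i
    rw [Matrix.mul_diagonal, hDdef, Matrix.diagonal_mul]
    have h := Real.mul_self_sqrt (hdiag i).le
    field_simp [he]
    simp only [he, inv_pow, Real.sq_sqrt (hdiag i).le]
    exact inv_mul_cancel₀ (hdiag i).ne'
  have htr : (D * A * D).trace = n := by
    rw [Matrix.trace]
    simp only [Matrix.diag_apply, hMdiag]
    simp
  have hsum : ∑ i, hM.1.eigenvalues i = n := by
    rw [← trace_eq_sum_eigs11 hM.1, htr]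
  have hprodle : ∏ i, hM.1.eigenvalues i ≤ 1 :=
    amgm11 hn _ (fun i => hM.eigenvalues_nonneg i) hsum
  have hdet : (D * A * D).det = (∏ i, e i)^2 * A.det := by
    rw [Matrix.det_mul, Matrix.det_mul, hDdef, Matrix.det_diagonal]
    ring
  have hdetM : (D * A * D).det = ∏ i, hM.1.eigenvalues i := by
    have := hM.1.det_eq_prod_eigenvalues
    exact_mod_cast this
  have hee : (∏ i, e i)^2 = ∏ i, (A i i)⁻¹ := by
    rw [← Finset.prod_pow]
    refine Finset.prod_congr rfl fun i _ => ?_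
    have : ((Real.sqrt (A i i))⁻¹)^2 = (A i i)⁻¹ := by
      rw [← Real.sqrt_inv, Real.sq_sqrt (inv_nonneg.mpr (hdiag i).le)]
    simpa [he] using this
  have hAdiagpos : (0:ℝ) < ∏ i, A i i := Finset.prod_pos fun i _ => hdiag i
  have : (∏ i, (A i i)⁻¹) * A.det ≤ 1 := by
    rw [← hee, ← hdet, hdetM]; exact hprodle
  rw [Finset.prod_inv_distrib] at this
  calc A.det = (∏ i, A i i) * ((∏ i, A i i)⁻¹ * A.det) := by
        field_simp
    _ ≤ (∏ i, A i i) * 1 := mul_le_mul_of_nonneg_left this hAdiagpos.le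
    _ = ∏ i, A i i := mul_one _

private lemma psd_outer11 {N : ℕ} (u : Fin N → ℝ) : (Matrix.vecMulVec u u).PosSemidef := by
  rw [Matrix.vecMulVec_eq (Fin 1)]
  have : Matrix.replicateRow (Fin 1) u = (Matrix.replicateCol (Fin 1) u)ᴴ := by
    simp [Matrix.conjTranspose_replicateCol]
  rw [this]
  exact Matrix.posSemidef_self_mul_conjTranspose _

private lemma det_rank_one_update11 {N : ℕ} {A : Matrix (Fin N) (Fin N) ℝ} (hA : A.PosDef)
    (u : Fin N → ℝ) :
    (A + Matrix.vecMulVec u u).det = A.det * (1 + u ⬝ᵥ A⁻¹ *ᵥ u) := by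
  rw [Matrix.vecMulVec_eq (Fin 1)]
  rw [Matrix.det_add_replicateCol_mul_replicateRow (isUnit_iff_ne_zero.mpr hA.det_pos.ne') u u]
  congr 1
  simp [Matrix.det_unique, Matrix.mul_apply, Matrix.replicateRow_apply, Matrix.replicateCol_apply,
    Matrix.one_apply, dotProduct, Matrix.mulVec, Finset.mul_sum, mul_comm]
  rw [Finset.sum_comm]
  refine Finset.sum_congr rfl fun i _ => Finset.sum_congr rfl fun j _ => by ring

private lemma min_one_le_two_log11 {u : ℝ} (hu : 0 ≤ u) : min 1 u ≤ 2 * Real.log (1 + u) := by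
  have h1u : (0:ℝ) < 1 + u := by linarith
  have hlog : 1 - (1+u)⁻¹ ≤ Real.log (1+u) := by
    have := Real.log_le_sub_one_of_pos (inv_pos.mpr h1u)
    rw [Real.log_inv] at this
    linarith
  rcases le_or_gt u 1 with h | h
  · rw [min_eq_right h]
    have key : u / 2 ≤ u / (1+u) :=
      div_le_div_of_nonneg_left hu h1u (by linarith)
    have : 1 - (1+u)⁻¹ = u / (1+u) := by field_simp; ring
    rw [this] at hlog
    linarith
  · rw [min_eq_left h.le]
    have h2 : Real.log 2 ≤ Real.log (1+u) := Real.log_le_log (by norm_num) (by linarith)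
    have := Real.log_two_gt_d9
    linarith

private lemma min_two_le11 {β s : ℝ} (hβ : 0 ≤ β) (hs : 0 ≤ s) :
    min 2 (2 * β * s) ≤ 2 * (1 + β) * min 1 s := by
  rcases le_or_gt s 1 with h | h
  · rw [min_eq_right h]
    calc min 2 (2*β*s) ≤ 2*β*s := min_le_right _ _
      _ ≤ 2*(1+β)*s := by nlinarith
  · rw [min_eq_left h.le]
    calc min 2 (2*β*s) ≤ 2 := min_le_left _ _
      _ ≤ 2*(1+β)*1 := by nlinarith


/-- Let `λ > 0`, `Λ = diag(λ₁,…,λ_N)` with `λ = λ₁ ≤ ⋯ ≤ λ_N`, `T ∈ ℕ`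
with effective dimension `d`, and `x₁,…,x_T ∈ ℝ^N` with `‖x_t‖₂ ≤ 1`. With
`V_t = Λ + ∑_{i=1}^{t−1} xᵢxᵢᵀ`, for every `β ≥ 0`,
`∑_{t=1}^T min{2, 2β‖x_t‖_{V_t⁻¹}} ≤ 4(1+β)√(T·d·log(1 + T/λ))`. -/
theorem statement11 {N : ℕ} (lam : ℝ) (hlam : 0 < lam) (lamSeq : ℕ → ℝ)
    (hfirst : lamSeq 1 = lam)
    (hmono : ∀ i j : ℕ, 1 ≤ i → i ≤ j → j ≤ N → lamSeq i ≤ lamSeq j)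
    (T : ℕ) (hT : 1 ≤ T)
    (x : ℕ → Fin N → ℝ)
    (hx : ∀ t ∈ Finset.Icc 1 T, Real.sqrt (∑ i, x t i ^ 2) ≤ 1)
    (d : ℕ) (hd1 : 1 ≤ d) (hdN : d ≤ N)
    (hdle : ((d : ℝ) - 1) * lamSeq d ≤ (T : ℝ) / Real.log (1 + T / lam))
    (hdmax : ∀ d' : ℕ, 1 ≤ d' → d' ≤ N →
      ((d' : ℝ) - 1) * lamSeq d' ≤ (T : ℝ) / Real.log (1 + T / lam) → d' ≤ d)
    (β : ℝ) (hβ : 0 ≤ β) :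
    let V : ℕ → Matrix (Fin N) (Fin N) ℝ := fun t =>
      Matrix.diagonal (fun i : Fin N => lamSeq ((i : ℕ) + 1)) +
        ∑ i ∈ Finset.Icc 1 (t - 1), Matrix.vecMulVec (x i) (x i)
    ∑ t ∈ Finset.Icc 1 T, min 2 (2 * β * Real.sqrt (x t ⬝ᵥ ((V t)⁻¹ *ᵥ x t))) ≤
      4 * (1 + β) * Real.sqrt (T * d * Real.log (1 + T / lam)) := by
  intro V
  have hVdef : ∀ t, V t = Matrix.diagonal (fun i : Fin N => lamSeq ((i : ℕ) + 1)) +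
      ∑ i ∈ Finset.Icc 1 (t - 1), Matrix.vecMulVec (x i) (x i) := fun t => rfl
  set L := Real.log (1 + T / lam) with hL
  have hTpos : (0:ℝ) < T := by exact_mod_cast hT
  have hLpos : 0 < L := by
    rw [hL]
    apply Real.log_pos
    have : 0 < (T:ℝ)/lam := div_pos hTpos hlam
    linarith
  have hlamseq : ∀ k : ℕ, 1 ≤ k → k ≤ N → lam ≤ lamSeq k := fun k h1 h2 => by
    have := hmono 1 k le_rfl h1 h2; rwa [hfirst] at this
  have hΛpos : ∀ i : Fin N, 0 < lamSeq ((i:ℕ)+1) := fun i =>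
    lt_of_lt_of_le hlam (hlamseq _ (Nat.le_add_left 1 i) (by omega))
  have hVpos : ∀ t, (V t).PosDef := by
    intro t
    rw [hVdef]
    apply (Matrix.PosDef.diagonal hΛpos).add_posSemidef
    refine Finset.sum_induction _ _ (fun a b ha hb => ha.add hb) Matrix.PosSemidef.zero
      (fun i _ => psd_outer11 (x i))
  set u : ℕ → ℝ := fun t => x t ⬝ᵥ (V t)⁻¹ *ᵥ x t with hu
  have hunn : ∀ t, 0 ≤ u t := fun t => by
    have h := ((hVpos t).inv).posSemidef.dotProduct_mulVec_nonneg (x t)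
    simpa [hu] using h
  have hVstep : ∀ t, 1 ≤ t → V (t+1) = V t + Matrix.vecMulVec (x t) (x t) := by
    intro t ht
    rw [hVdef, hVdef]
    have h1 : t - 1 + 1 = t := Nat.succ_pred_eq_of_pos ht
    have h2 := Finset.sum_Icc_succ_top (a := 1) (b := t - 1)
      (Nat.le_add_left 1 (t-1)) (fun i => Matrix.vecMulVec (x i) (x i))
    rw [h1] at h2
    rw [Nat.add_sub_cancel, h2, add_assoc]
  have htel : ∀ k, (V (k+1)).det = (V 1).det * ∏ t ∈ Finset.Icc 1 k, (1 + u t) := by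
    intro k
    induction k with
    | zero => simp
    | succ k ih =>
      rw [hVstep (k+1) (by omega), det_rank_one_update11 (hVpos (k+1)) (x (k+1))]
      rw [Finset.prod_Icc_succ_top (Nat.le_add_left 1 k), ih]
      ring
  -- diagonal entries of V (T+1)
  set s : Fin N → ℝ := fun i => ∑ t ∈ Finset.Icc 1 T, (x t i)^2 with hs
  have hsnn : ∀ i, 0 ≤ s i := fun i => Finset.sum_nonneg fun t _ => sq_nonneg _
  have hVTdiag : ∀ i, (V (T+1)) i i = lamSeq ((i:ℕ)+1) + s i := by
    intro i
    rw [hVdef]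
    simp [Matrix.add_apply, Matrix.sum_apply, Matrix.vecMulVec_apply, Nat.add_sub_cancel,
      hs, sq]
  have hdiagpos : ∀ i, 0 < (V (T+1)) i i := fun i => by
    rw [hVTdiag]; have := hΛpos i; have := hsnn i; linarith
  have hdetΛ : (V 1).det = ∏ i : Fin N, lamSeq ((i:ℕ)+1) := by
    rw [hVdef]; simp [Matrix.det_diagonal]
  have hΛprodpos : (0:ℝ) < ∏ i : Fin N, lamSeq ((i:ℕ)+1) := Finset.prod_pos fun i _ => hΛpos i
  have hhad : (V (T+1)).det ≤ ∏ i : Fin N, (lamSeq ((i:ℕ)+1) + s i) := by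
    have := hadamard11 (hVpos (T+1)).posSemidef hdiagpos
    calc (V (T+1)).det ≤ ∏ i : Fin N, (V (T+1)) i i := this
      _ = ∏ i : Fin N, (lamSeq ((i:ℕ)+1) + s i) := Finset.prod_congr rfl fun i _ => hVTdiag i
  have hprod_le : ∏ t ∈ Finset.Icc 1 T, (1 + u t) ≤ ∏ i : Fin N, (1 + s i / lamSeq ((i:ℕ)+1)) := by
    have h3 : ∏ i : Fin N, (lamSeq ((i:ℕ)+1) + s i) =
        (∏ i : Fin N, lamSeq ((i:ℕ)+1)) * ∏ i : Fin N, (1 + s i / lamSeq ((i:ℕ)+1)) := by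
      rw [← Finset.prod_mul_distrib]
      refine Finset.prod_congr rfl fun i _ => ?_
      field_simp [(hΛpos i).ne']
    have h4 : (∏ i : Fin N, lamSeq ((i:ℕ)+1)) * ∏ t ∈ Finset.Icc 1 T, (1 + u t) ≤
        (∏ i : Fin N, lamSeq ((i:ℕ)+1)) * ∏ i : Fin N, (1 + s i / lamSeq ((i:ℕ)+1)) := by
      calc (∏ i : Fin N, lamSeq ((i:ℕ)+1)) * ∏ t ∈ Finset.Icc 1 T, (1 + u t)
          = (V (T+1)).det := by rw [← hdetΛ, ← htel T]
        _ ≤ ∏ i : Fin N, (lamSeq ((i:ℕ)+1) + s i) := hhad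
        _ = _ := h3
    exact le_of_mul_le_mul_left h4 hΛprodpos
  have hfacpos : ∀ t, (0:ℝ) < 1 + u t := fun t => by have := hunn t; linarith
  have hfac2pos : ∀ i : Fin N, (0:ℝ) < 1 + s i / lamSeq ((i:ℕ)+1) := fun i => by
    have h1 := hsnn i; have h2 := hΛpos i; positivity
  have hlogsum : ∑ t ∈ Finset.Icc 1 T, Real.log (1 + u t) ≤
      ∑ i : Fin N, Real.log (1 + s i / lamSeq ((i:ℕ)+1)) := by
    rw [← Real.log_prod (fun t _ => (hfacpos t).ne'),
        ← Real.log_prod (fun i _ => (hfac2pos i).ne')]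
    exact Real.log_le_log (Finset.prod_pos fun t _ => hfacpos t) hprod_le
  -- sum of s is at most T
  have hsums : ∑ i : Fin N, s i ≤ T := by
    calc ∑ i : Fin N, s i = ∑ t ∈ Finset.Icc 1 T, ∑ i : Fin N, (x t i)^2 := Finset.sum_comm
      _ ≤ ∑ _t ∈ Finset.Icc 1 T, (1:ℝ) := by
        refine Finset.sum_le_sum fun t ht => ?_
        have h := hx t ht
        have hnn : (0:ℝ) ≤ ∑ i, x t i ^2 := Finset.sum_nonneg fun i _ => sq_nonneg _
        nlinarith [Real.sq_sqrt hnn, Real.sqrt_nonneg (∑ i, x t i ^2)]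
      _ = T := by simp [Nat.card_Icc]
  -- single coordinate bound
  have hsle : ∀ i : Fin N, s i ≤ T := fun i =>
    le_trans (Finset.single_le_sum (fun j _ => hsnn j) (Finset.mem_univ i)) hsums
  have hcoord : ∑ i : Fin N, Real.log (1 + s i / lamSeq ((i:ℕ)+1)) ≤ 2 * d * L := by
    have hbound : ∀ i : Fin N, Real.log (1 + s i / lamSeq ((i:ℕ)+1)) ≤
        (if (i:ℕ)+1 ≤ d then L else s i * ((d:ℝ) * L / T)) := by
      intro i
      by_cases hcase : (i:ℕ)+1 ≤ d
      · rw [if_pos hcase]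
        have hdd : s i / lamSeq ((i:ℕ)+1) ≤ (T:ℝ) / lam :=
          div_le_div₀ hTpos.le (hsle i) hlam (hlamseq _ (Nat.le_add_left 1 i) (by omega))
        rw [hL]
        exact Real.log_le_log (hfac2pos i) (by linarith)
      · rw [if_neg hcase]
        push_neg at hcase
        have hd1N : d + 1 ≤ N := by omega
        have hgt : (T:ℝ)/L < (d:ℝ) * lamSeq (d+1) := by
          by_contra hcon
          push_neg at hcon
          have hc2 : ((↑(d+1):ℝ) - 1) * lamSeq (d+1) ≤ (T:ℝ)/L := by push_cast; linarith
          have := hdmax (d+1) (by omega) hd1N hc2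
          omega
        have hlge : lamSeq (d+1) ≤ lamSeq ((i:ℕ)+1) :=
          hmono (d+1) ((i:ℕ)+1) (by omega) (by omega) (by omega)
        have hlampos : (0:ℝ) < lamSeq ((i:ℕ)+1) := hΛpos i
        have hlog_le : Real.log (1 + s i / lamSeq ((i:ℕ)+1)) ≤ s i / lamSeq ((i:ℕ)+1) := by
          have := Real.log_le_sub_one_of_pos (hfac2pos i)
          linarith
        have hfinal : s i / lamSeq ((i:ℕ)+1) ≤ s i * ((d:ℝ) * L / T) := by
          have hdpos : (0:ℝ) < d := by exact_mod_cast hd1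
          have hTd : (T:ℝ) < (d:ℝ) * L * lamSeq ((i:ℕ)+1) := by
            rw [div_lt_iff₀ hLpos] at hgt
            have h6 : (d:ℝ) * lamSeq (d+1) * L ≤ (d:ℝ) * lamSeq ((i:ℕ)+1) * L :=
              mul_le_mul_of_nonneg_right
                (mul_le_mul_of_nonneg_left hlge hdpos.le) hLpos.le
            nlinarith
          have hsn := hsnn i
          have h5 : s i * (T:ℝ) ≤ s i * ((d:ℝ) * L * lamSeq ((i:ℕ)+1)) :=
            mul_le_mul_of_nonneg_left hTd.le hsn
          rw [div_le_iff₀ hlampos, show s i * ((d:ℝ) * L / T) * lamSeq ((i:ℕ)+1)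
              = s i * ((d:ℝ) * L * lamSeq ((i:ℕ)+1)) / T by ring, le_div_iff₀ hTpos]
          linarith
        linarith
    calc ∑ i : Fin N, Real.log (1 + s i / lamSeq ((i:ℕ)+1)) ≤
        ∑ i : Fin N, (if (i:ℕ)+1 ≤ d then L else s i * ((d:ℝ) * L / T)) :=
          Finset.sum_le_sum fun i _ => hbound i
      _ = ∑ i ∈ Finset.univ.filter (fun i : Fin N => (i:ℕ)+1 ≤ d), L +
          ∑ i ∈ Finset.univ.filter (fun i : Fin N => ¬((i:ℕ)+1 ≤ d)), s i * ((d:ℝ) * L / T) :=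
          Finset.sum_ite _ _
      _ ≤ (d:ℝ) * L + (d:ℝ) * L := by
        gcongr ?_ + ?_
        · rw [Finset.sum_const, nsmul_eq_mul]
          have hcard : (Finset.univ.filter (fun i : Fin N => (i:ℕ)+1 ≤ d)).card ≤ d := by
            have : (Finset.univ.filter (fun i : Fin N => (i:ℕ)+1 ≤ d)).card ≤
                (Finset.range d).card := by
              refine Finset.card_le_card_of_injOn (fun i : Fin N => (i:ℕ)) ?_ ?_
              · intro i hi
                simp at hi
                simp [Finset.mem_range]; omega
              · intro a _ b _ hab
                exact Fin.ext hab
            simpa using this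
          exact mul_le_mul_of_nonneg_right (by exact_mod_cast hcard) hLpos.le
        · calc ∑ i ∈ Finset.univ.filter (fun i : Fin N => ¬((i:ℕ)+1 ≤ d)),
              s i * ((d:ℝ) * L / T) ≤ ∑ i : Fin N, s i * ((d:ℝ) * L / T) := by
                apply Finset.sum_le_sum_of_subset_of_nonneg (Finset.filter_subset _ _)
                intro i _ _
                have := hsnn i
                positivity
            _ = (∑ i : Fin N, s i) * ((d:ℝ) * L / T) := by rw [Finset.sum_mul]
            _ ≤ (T:ℝ) * ((d:ℝ) * L / T) := by
                apply mul_le_mul_of_nonneg_right hsums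
                positivity
            _ = (d:ℝ) * L := by field_simp
      _ = 2 * d * L := by ring
  -- sum of min(1, u) bound
  have hmin_sum : ∑ t ∈ Finset.Icc 1 T, min 1 (u t) ≤ 4 * d * L := by
    calc ∑ t ∈ Finset.Icc 1 T, min 1 (u t) ≤
        ∑ t ∈ Finset.Icc 1 T, 2 * Real.log (1 + u t) :=
          Finset.sum_le_sum fun t _ => min_one_le_two_log11 (hunn t)
      _ = 2 * ∑ t ∈ Finset.Icc 1 T, Real.log (1 + u t) := by rw [Finset.mul_sum]
      _ ≤ 2 * (2 * d * L) := by
          have := hlogsum.trans hcoord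
          linarith
      _ = 4 * d * L := by ring
  set b : ℕ → ℝ := fun t => min 1 (Real.sqrt (u t)) with hb
  have hbnn : ∀ t, 0 ≤ b t := fun t => le_min zero_le_one (Real.sqrt_nonneg _)
  have hbsq : ∀ t, b t ^ 2 = min 1 (u t) := by
    intro t
    rcases le_or_gt (u t) 1 with h | h
    · rw [hb]
      simp only []
      rw [min_eq_right (Real.sqrt_le_one.mpr h), min_eq_right h, Real.sq_sqrt (hunn t)]
    · rw [hb]
      simp only []
      rw [min_eq_left (Real.one_le_sqrt.mpr h.le), min_eq_left h.le, one_pow]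
  have hbsum_nn : (0:ℝ) ≤ ∑ t ∈ Finset.Icc 1 T, b t :=
    Finset.sum_nonneg fun t _ => hbnn t
  have hCS : (∑ t ∈ Finset.Icc 1 T, b t)^2 ≤ (T:ℝ) * ∑ t ∈ Finset.Icc 1 T, (b t)^2 := by
    have := sq_sum_le_card_mul_sum_sq (s := Finset.Icc 1 T) (f := b)
    simpa [Nat.card_Icc] using this
  have hbsum : ∑ t ∈ Finset.Icc 1 T, b t ≤ 2 * Real.sqrt ((T:ℝ) * d * L) := by
    have h1 : (∑ t ∈ Finset.Icc 1 T, b t)^2 ≤ 4 * ((T:ℝ) * d * L) := by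
      calc (∑ t ∈ Finset.Icc 1 T, b t)^2 ≤ (T:ℝ) * ∑ t ∈ Finset.Icc 1 T, (b t)^2 := hCS
        _ = (T:ℝ) * ∑ t ∈ Finset.Icc 1 T, min 1 (u t) := by
            congr 1
            exact Finset.sum_congr rfl fun t _ => hbsq t
        _ ≤ (T:ℝ) * (4 * d * L) := mul_le_mul_of_nonneg_left hmin_sum hTpos.le
        _ = 4 * ((T:ℝ) * d * L) := by ring
    calc ∑ t ∈ Finset.Icc 1 T, b t = Real.sqrt ((∑ t ∈ Finset.Icc 1 T, b t)^2) :=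
        (Real.sqrt_sq hbsum_nn).symm
      _ ≤ Real.sqrt (4 * ((T:ℝ) * d * L)) := Real.sqrt_le_sqrt h1
      _ = 2 * Real.sqrt ((T:ℝ) * d * L) := by
          rw [show (4:ℝ) * ((T:ℝ)*d*L) = 2^2 * ((T:ℝ)*d*L) by ring,
            Real.sqrt_mul (by positivity), Real.sqrt_sq (by norm_num)]
  calc ∑ t ∈ Finset.Icc 1 T, min 2 (2 * β * Real.sqrt (x t ⬝ᵥ ((V t)⁻¹ *ᵥ x t)))
      = ∑ t ∈ Finset.Icc 1 T, min 2 (2 * β * Real.sqrt (u t)) := rfl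
    _ ≤ ∑ t ∈ Finset.Icc 1 T, 2 * (1+β) * b t :=
        Finset.sum_le_sum fun t _ => min_two_le11 hβ (Real.sqrt_nonneg _)
    _ = 2 * (1+β) * ∑ t ∈ Finset.Icc 1 T, b t := by rw [← Finset.mul_sum]
    _ ≤ 2 * (1+β) * (2 * Real.sqrt ((T:ℝ) * d * L)) :=
        mul_le_mul_of_nonneg_left hbsum (by positivity)
    _ = 4 * (1+β) * Real.sqrt ((T:ℝ) * d * L) := by ring
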